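/- Let (S, ≼) be a meet semi-lattice with least element m such that ≼ is well-founded (there is no infinite strictly decreasing sequence), and let F : S → S. If there exists an F-meeting point, then there exists y ≠ m with y ≼ F(y), i.e., a nontrivial pre-fixed point of F. -/

import Mathlib

/-- `x` is an `F`-meeting point: `x ≠ ⊥`, and for every finite ≼-chain
    `⊥ ≠ x₁ ≼ ⋯ ≼ xₙ ≼ x`, the infimum `inf (F x₁, …, F xₙ, x)` is not `⊥`. -/
def IsMeetingPoint {S : Type*} [SemilatticeInf S] [OrderBot S] (F : S → S) (x : S) : Prop :=
  x ≠ ⊥ ∧ ∀ (n : ℕ) (c : Fin (n + 1) → S), Monotone c → c 0 ≠ ⊥ → c (Fin.last n) ≤ x →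
    (Finset.univ.inf' Finset.univ_nonempty fun i => F (c i)) ⊓ x ≠ ⊥

/-- Auxiliary sequence: `a 0 = x`, `a (n+1) = a n ⊓ F (a n)`. -/
def mpSeq {S : Type*} [SemilatticeInf S] (F : S → S) (x : S) : ℕ → S
  | 0 => x
  | n + 1 => mpSeq F x n ⊓ F (mpSeq F x n)

lemma mpSeq_antitone {S : Type*} [SemilatticeInf S] (F : S → S) (x : S) :
    Antitone (mpSeq F x) := by
  apply antitone_nat_of_succ_le
  intro n
  exact inf_le_left

lemma mpSeq_le_of_le {S : Type*} [SemilatticeInf S] (F : S → S) (x : S) (t : S)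
    (htx : t ≤ x) : ∀ k, (∀ j ≤ k, t ≤ F (mpSeq F x j)) → t ≤ mpSeq F x (k + 1) := by
  intro k
  induction k with
  | zero => intro h; exact le_inf htx (h 0 le_rfl)
  | succ k ih =>
    intro h
    exact le_inf (ih fun j hj => h j (hj.trans (Nat.le_succ _)))
      (h (k + 1) le_rfl)

theorem stmt1 {S : Type*} [SemilatticeInf S] [OrderBot S]
    (hwf : WellFounded ((· < ·) : S → S → Prop)) (F : S → S)
    (hmp : ∃ x, IsMeetingPoint F x) :
    ∃ y, y ≠ ⊥ ∧ y ≤ F y := by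
  obtain ⟨x, hx, hchain⟩ := hmp
  set a := mpSeq F x with ha
  -- every element of the sequence is nonbot
  have hne : ∀ k, a k ≠ ⊥ := by
    intro k
    induction k with
    | zero => exact hx
    | succ k ih =>
      -- build the chain c i = a (k - i)
      set c : Fin (k + 1) → S := fun i => a (k - i.val) with hc
      have hmono : Monotone c := by
        intro i j hij
        exact mpSeq_antitone F x (Nat.sub_le_sub_left hij k)
      have hc0 : c 0 ≠ ⊥ := by simpa [hc] using ih
      have hclast : c (Fin.last k) ≤ x := by
        simp only [hc, Fin.val_last, Nat.sub_self]
        exact le_rfl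
      have key := hchain k c hmono hc0 hclast
      -- the inf over the chain is ≤ a (k+1)
      have hle : (Finset.univ.inf' Finset.univ_nonempty fun i => F (c i)) ⊓ x ≤ a (k + 1) := by
        apply mpSeq_le_of_le F x _ inf_le_right
        intro j hj
        have : (Finset.univ.inf' Finset.univ_nonempty fun i => F (c i)) ≤
            F (c ⟨k - j, Nat.lt_succ_of_le (Nat.sub_le k j)⟩) :=
          Finset.inf'_le _ (Finset.mem_univ _)
        have hcj : c ⟨k - j, Nat.lt_succ_of_le (Nat.sub_le k j)⟩ = a j := by
          simp [hc, Nat.sub_sub_self hj]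
        rw [hcj] at this
        exact le_trans inf_le_left this
      intro hbot
      exact key (le_antisymm (hbot ▸ hle) bot_le)
  -- the sequence stabilizes by well-foundedness
  have hA : (Set.range a).Nonempty := ⟨a 0, ⟨0, rfl⟩⟩
  obtain ⟨k, hk⟩ := hwf.min_mem (Set.range a) hA
  have hstab : a (k + 1) = a k := by
    have h1 : a (k + 1) ≤ a k := inf_le_left
    rcases h1.lt_or_eq with hlt | heq
    · exact absurd (hk ▸ hlt) (hwf.not_lt_min (Set.range a) ⟨k + 1, rfl⟩)
    · exact heq
  refine ⟨a k, hne k, ?_⟩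
  have : a k ⊓ F (a k) = a k := hstab
  exact inf_eq_left.mp this
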